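/- Let G be a path-connected topological group and let f : ∂(Iⁿ) → G be a continuous map on the boundary of the n-cube satisfying the periodicity conditions f(0, x₂, …, xₙ) = f(1, x₂, …, xₙ), f(x₁, 0, x₃, …, xₙ) = f(x₁, 1, x₃, …, xₙ), …, f(x₁, …, x_{n−1}, 0) = f(x₁, …, x_{n−1}, 1). Then f is homotopic to a constant map. -/

import Mathlib

/-- The boundary of the `n`-cube `Iⁿ = [0,1]ⁿ`. -/
def cubeBoundary (n : ℕ) : Set (Fin n → unitInterval) :=
  {x | ∃ i, x i = 0 ∨ x i = 1}

/-- A map on the boundary of the cube identifies opposite faces if its values at the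
two points obtained by setting some coordinate to `0`, resp. `1`, always agree. -/
def IdentifiesOppositeFaces {n : ℕ} {X : Type*} [TopologicalSpace X]
    (f : C(cubeBoundary n, X)) : Prop :=
  ∀ (x : Fin n → unitInterval) (i : Fin n),
    f ⟨Function.update x i 0, ⟨i, Or.inl (by simp)⟩⟩ =
      f ⟨Function.update x i 1, ⟨i, Or.inr (by simp)⟩⟩

private lemma cb_apply_eq {n : ℕ} {G : Type*} [TopologicalSpace G]
    (g : C(cubeBoundary n, G)) {u v : Fin n → unitInterval} (h : u = v)
    (hu : u ∈ cubeBoundary n) (hv : v ∈ cubeBoundary n) :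
    g ⟨u, hu⟩ = g ⟨v, hv⟩ := by subst h; rfl

private theorem cube_key {G : Type*} [TopologicalSpace G] [Group G] [IsTopologicalGroup G]
    {n : ℕ} (f : C(cubeBoundary n, G)) (hf : IdentifiesOppositeFaces f) (k : ℕ) :
    ∃ (g : C(cubeBoundary n, G)) (c : G),
      f.Homotopic (g * ContinuousMap.const _ c) ∧ IdentifiesOppositeFaces g ∧
      ∀ (x : cubeBoundary n) (i : Fin n), (i : ℕ) < k → (x.1 i = 0 ∨ x.1 i = 1) →
        g x = 1 := by
  induction k with
  | zero =>
    refine ⟨f, 1, ?_, hf, fun x i hi _ => absurd hi (Nat.not_lt_zero _)⟩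
    have h1 : f * ContinuousMap.const _ (1 : G) = f := by ext x; simp
    rw [h1]
  | succ k ih =>
    obtain ⟨g, c, hhom, hid, hvan⟩ := ih
    by_cases hk : k < n
    · set i : Fin n := ⟨k, hk⟩ with hi_def
      have hmem0 : ∀ x : Fin n → unitInterval, Function.update x i 0 ∈ cubeBoundary n :=
        fun x => ⟨i, Or.inl (by simp)⟩
      let q : C(cubeBoundary n, cubeBoundary n) :=
        ⟨fun x => ⟨Function.update x.1 i 0, hmem0 x.1⟩,
          (continuous_subtype_val.update i continuous_const).subtype_mk _⟩
      let g' : C(cubeBoundary n, G) := g * (g.comp q)⁻¹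
      have hz0mem : (fun _ : Fin n => (0 : unitInterval)) ∈ cubeBoundary n := ⟨i, Or.inl rfl⟩
      let z0 : cubeBoundary n := ⟨fun _ => 0, hz0mem⟩
      -- the contraction of the `i`-th face to the origin
      let σ : unitInterval × cubeBoundary n → (Fin n → unitInterval) := fun p j =>
        if j = i then 0
        else ⟨p.1.1 * (p.2.1 j).1,
          mul_nonneg p.1.2.1 (p.2.1 j).2.1, mul_le_one₀ p.1.2.2 (p.2.1 j).2.1 (p.2.1 j).2.2⟩
      have hσcont : Continuous σ := by
        refine continuous_pi fun j => ?_
        by_cases hj : j = i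
        · simp only [σ, if_pos hj]; exact continuous_const
        · simp only [σ, if_neg hj]
          refine Continuous.subtype_mk ?_ _
          exact (continuous_subtype_val.comp continuous_fst).mul
            (continuous_subtype_val.comp ((continuous_apply j).comp
              (continuous_subtype_val.comp continuous_snd)))
      have hσmem : ∀ p, σ p ∈ cubeBoundary n := fun p => ⟨i, Or.inl (if_pos rfl)⟩
      have hσ0 : ∀ x : cubeBoundary n, σ (0, x) = fun _ => (0 : unitInterval) := by
        intro x; funext j
        by_cases hj : j = i
        · simp [σ, hj]
        · simp only [σ, if_neg hj]
          exact Subtype.ext (zero_mul _)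
      have hσ1 : ∀ x : cubeBoundary n, σ (1, x) = Function.update x.1 i 0 := by
        intro x; funext j
        by_cases hj : j = i
        · subst hj; simp [σ]
        · simp only [σ, if_neg hj, Function.update_of_ne hj]
          exact Subtype.ext (one_mul _)
      refine ⟨g', g z0 * c, ?_, ?_, ?_⟩
      · refine hhom.trans ⟨⟨⟨fun p => g p.2 * (g ⟨σ p, hσmem p⟩)⁻¹ * g z0 * c, ?_⟩, ?_, ?_⟩⟩
        · refine ((((g.continuous.comp continuous_snd).mul ?_).mul continuous_const).mul
            continuous_const)
          exact (g.continuous.comp (hσcont.subtype_mk _)).inv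
        · intro x
          have h0 : g ⟨σ (0, x), hσmem _⟩ = g z0 := cb_apply_eq g (hσ0 x) _ _
          simp only [h0, ContinuousMap.mul_apply, ContinuousMap.const_apply]
          group
        · intro x
          have h1 : g ⟨σ (1, x), hσmem _⟩ = g (q x) := cb_apply_eq g (hσ1 x) _ _
          simp only [h1, g', ContinuousMap.mul_apply, ContinuousMap.const_apply,
            ContinuousMap.inv_apply, ContinuousMap.comp_apply]
          group
      · intro x j
        simp only [g', ContinuousMap.mul_apply, ContinuousMap.inv_apply,
          ContinuousMap.comp_apply]
        by_cases hji : j = i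
        · subst hji
          have e0 : g (q ⟨Function.update x i 0, ⟨i, Or.inl (by simp)⟩⟩) =
              g ⟨Function.update x i 0, hmem0 x⟩ :=
            cb_apply_eq g (by simp [q, Function.update_idem]) _ _
          have e1 : g (q ⟨Function.update x i 1, ⟨i, Or.inr (by simp)⟩⟩) =
              g ⟨Function.update x i 0, hmem0 x⟩ :=
            cb_apply_eq g (by simp [q, Function.update_idem]) _ _
          rw [e0, e1, hid x i]
        · have e0 : g (q ⟨Function.update x j 0, ⟨j, Or.inl (by simp)⟩⟩) =
              g ⟨Function.update (Function.update x i 0) j 0,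
                ⟨i, Or.inl (by rw [Function.update_of_ne (Ne.symm hji)]; simp)⟩⟩ :=
            cb_apply_eq g (by simp [q, Function.update_comm hji]) _ _
          have e1 : g (q ⟨Function.update x j 1, ⟨j, Or.inr (by simp)⟩⟩) =
              g ⟨Function.update (Function.update x i 0) j 1,
                ⟨i, Or.inl (by rw [Function.update_of_ne (Ne.symm hji)]; simp)⟩⟩ :=
            cb_apply_eq g (by simp [q, Function.update_comm hji]) _ _
          rw [e0, e1, hid x j, hid (Function.update x i 0) j]
      · intro x j hj hface
        simp only [g', ContinuousMap.mul_apply, ContinuousMap.inv_apply,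
          ContinuousMap.comp_apply]
        rcases Nat.lt_succ_iff_lt_or_eq.mp hj with hj' | hj'
        · have hji : j ≠ i := fun h => absurd (h ▸ rfl : (j : ℕ) = k) (Nat.ne_of_lt hj')
          have hv1 : g x = 1 := hvan x j hj' hface
          have hv2 : g (q x) = 1 := by
            refine hvan (q x) j hj' ?_
            show Function.update x.1 i 0 j = 0 ∨ Function.update x.1 i 0 j = 1
            rwa [Function.update_of_ne hji]
          rw [hv1, hv2]; group
        · have hji : j = i := Fin.ext hj'
          subst hji
          rcases hface with h0 | h0
          · have hqx : q x = x := Subtype.ext (by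
              show Function.update x.1 i 0 = x.1
              conv_lhs => rw [← h0]
              exact Function.update_eq_self i x.1)
            rw [hqx]; group
          · have e : g (q x) = g x := by
              have h01 : g (q x) = g ⟨Function.update x.1 i 1, ⟨i, Or.inr (by simp)⟩⟩ := by
                refine Eq.trans ?_ (hid x.1 i)
                exact cb_apply_eq g rfl _ _
              rw [h01]
              refine cb_apply_eq g ?_ _ _
              conv_lhs => rw [← h0]
              exact Function.update_eq_self i x.1
            rw [e]; group
    · refine ⟨g, c, hhom, hid, fun x j hj hface => ?_⟩
      exact hvan x j (lt_of_lt_of_le j.isLt (not_lt.mp hk)) hface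

/-- Every continuous map from `∂(Iⁿ)` to a path-connected topological group which
identifies opposite faces of the cube is homotopic to a constant map. -/
theorem stmt_8 {G : Type*} [TopologicalSpace G] [Group G] [IsTopologicalGroup G]
    [PathConnectedSpace G] {n : ℕ} (f : C(cubeBoundary n, G))
    (hf : IdentifiesOppositeFaces f) :
    ∃ c : G, f.Homotopic (ContinuousMap.const _ c) := by
  obtain ⟨g, c, hhom, -, hvan⟩ := cube_key f hf n
  have hconst : g * ContinuousMap.const _ c = ContinuousMap.const _ c := by
    ext x
    obtain ⟨i, hi⟩ := x.2
    simp [hvan x i i.isLt hi]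
  exact ⟨c, hconst ▸ hhom⟩
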